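/- Let R be a finite commutative ring in which 2 is not a unit. Then the unit graph G(R) is |U(R)|-regular, where U(R) is the group of units of R. -/

import Mathlib

open SimpleGraph Finset
open scoped Classical

/-- The unit graph of a commutative ring: distinct `x, y` adjacent iff `x + y` is a unit. -/
def unitGraphR (R : Type*) [CommRing R] : SimpleGraph R where
  Adj x y := x ≠ y ∧ IsUnit (x + y)
  symm := ⟨fun x y ⟨h1, h2⟩ => ⟨h1.symm, by rwa [add_comm]⟩⟩
  loopless := ⟨fun x ⟨h, _⟩ => h rfl⟩

/-- The unit graph of `ZMod n`. -/
def unitGraph (n : ℕ) : SimpleGraph (ZMod n) := unitGraphR (ZMod n)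

/-- The number of edges of `G` with one endpoint in `W` and the other outside `W`. -/
noncomputable def cutSize {V : Type*} [Fintype V] (G : SimpleGraph V) (W : Finset V) : ℕ :=
  (G.edgeFinset.filter (fun e => (∃ x ∈ e, x ∈ W) ∧ (∃ x ∈ e, x ∉ W))).card

/-- The edge-connectivity of `G`: minimum cut size over nonempty proper vertex subsets. -/
noncomputable def edgeConn {V : Type*} [Fintype V] (G : SimpleGraph V) : ℕ :=
  sInf {n | ∃ W : Finset V, W.Nonempty ∧ W ≠ Finset.univ ∧ n = cutSize G W}

/-- The incidence matrix of `G` over `F_2`, rows indexed by vertices, columns by edges. -/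
noncomputable def incMat {V : Type*} [Fintype V] (G : SimpleGraph V) :
    Matrix V G.edgeFinset (ZMod 2) :=
  fun v e => if v ∈ (e : Sym2 V) then 1 else 0

/-- The binary code generated by the rows of the incidence matrix of `G`. -/
noncomputable def rowCode {V : Type*} [Fintype V] (G : SimpleGraph V) :
    Submodule (ZMod 2) (G.edgeFinset → ZMod 2) :=
  Submodule.span (ZMod 2) (Set.range (incMat G))

/-- The minimum Hamming weight of a nonzero codeword of the incidence-matrix code of `G`. -/
noncomputable def minDist {V : Type*} [Fintype V] (G : SimpleGraph V) : ℕ :=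
  sInf {w | ∃ c ∈ rowCode G, c ≠ 0 ∧ w = hammingNorm c}

theorem unitGraphR_regular_of_two_not_unit (R : Type*) [CommRing R] [Fintype R]
    (h2 : ¬ IsUnit (2 : R)) :
    (unitGraphR R).IsRegularOfDegree (Fintype.card Rˣ) := by
  intro x
  rw [← SimpleGraph.card_neighborFinset_eq_degree, Fintype.card, eq_comm]
  apply Finset.card_bij (fun (u : Rˣ) _ => (u : R) - x)
  · intro u _
    rw [SimpleGraph.mem_neighborFinset]
    refine ⟨fun h => h2 ?_, ?_⟩
    · have hu : (u : R) = 2 * x := by linear_combination -h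
      exact isUnit_of_mul_isUnit_left (hu ▸ u.isUnit)
    · have : x + ((u:R) - x) = u := by ring
      rw [this]; exact u.isUnit
  · intro a _ b _ h
    ext
    exact sub_left_inj.mp h
  · intro y hy
    rw [SimpleGraph.mem_neighborFinset] at hy
    obtain ⟨hne, hu⟩ := hy
    exact ⟨hu.unit, Finset.mem_univ _, by simp⟩
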